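/- Let 𝒯_𝕊 denote the set of all rooted trees with a given outdegree sequence 𝕊. The maximum rank over all trees in 𝒯_𝕊 and all their vertices is achieved at the root of some such tree: for every T ∈ 𝒯_𝕊 and every vertex v of T, there exists T' ∈ 𝒯_𝕊 with root r' such that R_{T'}(r') ≥ R_T(v). -/

import Mathlib

/-- Rooted trees: a root together with a (possibly empty) list of subtrees. -/
inductive RTree : Type
  | node : List RTree → RTree

namespace RTree

mutual
  /-- The rank (protection number) of the root of a rooted tree: the minimum
  distance from the root to a leaf descendant.  Leaves have rank `0`. -/
  def rank : RTree → ℕ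
    | .node [] => 0
    | .node (t :: ts) => minRankAux t ts + 1
  termination_by t => sizeOf t
  decreasing_by
    all_goals simp_wf
    all_goals omega
  /-- Minimum of the ranks of `t :: ts`. -/
  def minRankAux : RTree → List RTree → ℕ
    | t, [] => rank t
    | t, s :: ts => min (rank t) (minRankAux s ts)
  termination_by t ts => sizeOf t + sizeOf ts
  decreasing_by
    all_goals simp_wf
    all_goals omega
end

mutual
  /-- The order of a rooted tree: its number of vertices. -/
  def order : RTree → ℕ
    | .node ts => orderList ts + 1
  def orderList : List RTree → ℕ
    | [] => 0
    | t :: ts => order t + orderList ts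
end

mutual
  /-- The security of a rooted tree: the sum of the ranks of all of its vertices. -/
  def security : RTree → ℕ
    | .node ts => rank (.node ts) + securityList ts
  def securityList : List RTree → ℕ
    | [] => 0
    | t :: ts => security t + securityList ts
end

mutual
  /-- The height of a rooted tree: the maximum distance from the root to a leaf. -/
  def height : RTree → ℕ
    | .node [] => 0
    | .node (t :: ts) => maxHeightAux t ts + 1
  termination_by t => sizeOf t
  decreasing_by
    all_goals simp_wf
    all_goals omega
  def maxHeightAux : RTree → List RTree → ℕ
    | t, [] => height t
    | t, s :: ts => max (height t) (maxHeightAux s ts)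
  termination_by t ts => sizeOf t + sizeOf ts
  decreasing_by
    all_goals simp_wf
    all_goals omega
end

mutual
  /-- The outdegree sequence of a rooted tree: the multiset of the numbers of
  children of all of its vertices. -/
  def degSeq : RTree → Multiset ℕ
    | .node ts => ts.length ::ₘ degSeqList ts
  def degSeqList : List RTree → Multiset ℕ
    | [] => 0
    | t :: ts => degSeq t + degSeqList ts
end

/-- The subtree of `T` rooted at the vertex with position `p` (a list of child
indices, read from the root), if such a vertex exists.  The vertices of `T` are
exactly the valid positions; the rank of a vertex in `T` equals the rank (of the
root) of the subtree of `T` rooted at that vertex. -/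
def subtreeAt : List ℕ → RTree → Option RTree
  | [], t => some t
  | i :: is, .node ts => (ts[i]?).bind (subtreeAt is)

/-- A rooted path whose root is an end vertex: every vertex has at most one child. -/
def IsPath : RTree → Prop
  | .node [] => True
  | .node [t] => IsPath t
  | .node (_ :: _ :: _) => False

/-- A `k`-ary tree: every vertex has at most `k` children. -/
def IsKary (k : ℕ) (T : RTree) : Prop :=
  ∀ p ts, subtreeAt p T = some (.node ts) → ts.length ≤ k

/-- The rooted path with `n` edges (`n + 1` vertices). -/
def pathTree : ℕ → RTree
  | 0 => .node []
  | n + 1 => .node [pathTree n]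

/-- The starlike tree `S(ℓ₁, …, ℓ_k)`: paths of lengths `ℓ₁, …, ℓ_k` with one end vertex
of each identified to a single vertex, the root. -/
def starlike (ls : List ℕ) : RTree := .node (ls.map (fun l => pathTree (l - 1)))

/-- A rooted complete `k`-ary tree: every non-leaf vertex has exactly `k` children, all
leaves lie on at most two consecutive levels, and at most one vertex has both leaf and
non-leaf children. -/
def IsCompleteKary (k : ℕ) (T : RTree) : Prop :=
  (∀ p ts, subtreeAt p T = some (.node ts) → ts = [] ∨ ts.length = k) ∧
  T.height ≤ T.rank + 1 ∧
  (∀ p q ts us, subtreeAt p T = some (.node ts) → subtreeAt q T = some (.node us) →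
    (∃ c ∈ ts, c = RTree.node []) → (∃ c ∈ ts, c ≠ RTree.node []) →
    (∃ c ∈ us, c = RTree.node []) → (∃ c ∈ us, c ≠ RTree.node []) → p = q)

mutual
  /-- Graft `u` at a minimum-rank leaf of the tree. -/
  def graft (u : RTree) : RTree → RTree
    | .node [] => u
    | .node (t :: ts) => .node ((graftList u t ts).1 :: (graftList u t ts).2)
  termination_by t => sizeOf t
  decreasing_by
    all_goals simp_wf
    all_goals omega
  def graftList (u : RTree) : RTree → List RTree → RTree × List RTree
    | t, [] => (graft u t, [])
    | t, s :: ts =>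
      if rank t ≤ minRankAux s ts then (graft u t, s :: ts)
      else (t, (graftList u s ts).1 :: (graftList u s ts).2)
  termination_by t ts => sizeOf t + sizeOf ts
  decreasing_by
    all_goals simp_wf
    all_goals omega
end

theorem length_graftList (u : RTree) (t : RTree) (ts : List RTree) :
    (graftList u t ts).2.length = ts.length := by
  induction ts generalizing t with
  | nil => simp [graftList]
  | cons s ts ih =>
    rw [graftList]
    split
    · simp
    · simp [ih s]

mutual
theorem degSeq_graft (u t : RTree) :
    degSeq (graft u t) + {0} = degSeq u + degSeq t := by
  cases t with
  | node ts =>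
    cases ts with
    | nil =>
      simp [graft, degSeq, degSeqList, ← Multiset.singleton_add]
    | cons t ts =>
      rw [graft]
      have h := degSeq_graftList u t ts
      have hl := length_graftList u t ts
      simp only [degSeq, degSeqList, List.length_cons, hl]
      simp only [← Multiset.singleton_add] at h ⊢
      calc {ts.length + 1} + (degSeq (graftList u t ts).1 +
            degSeqList (graftList u t ts).2) + {0}
          = {ts.length + 1} + (degSeq (graftList u t ts).1 +
            degSeqList (graftList u t ts).2 + {0}) := by abel
        _ = {ts.length + 1} + (degSeq u + degSeqList (t :: ts)) := by rw [h]
        _ = degSeq u + ({ts.length + 1} + (degSeq t + degSeqList ts)) := by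
            simp only [degSeqList]; abel
termination_by sizeOf t
theorem degSeq_graftList (u t : RTree) (ts : List RTree) :
    degSeq (graftList u t ts).1 + degSeqList (graftList u t ts).2 + {0}
      = degSeq u + degSeqList (t :: ts) := by
  cases ts with
  | nil =>
    have h := degSeq_graft u t
    simp only [graftList, degSeqList]
    calc degSeq (graft u t) + 0 + {0} = degSeq (graft u t) + {0} := by abel
      _ = degSeq u + degSeq t := h
      _ = degSeq u + (degSeq t + 0) := by abel
  | cons s ss =>
    rw [graftList]
    split
    · have h := degSeq_graft u t
      simp only [degSeqList]
      calc degSeq (graft u t) + (degSeq s + degSeqList ss) + {0}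
          = degSeq (graft u t) + {0} + (degSeq s + degSeqList ss) := by abel
        _ = degSeq u + degSeq t + (degSeq s + degSeqList ss) := by rw [h]
        _ = degSeq u + (degSeq t + (degSeq s + degSeqList ss)) := by abel
    · have h := degSeq_graftList u s ss
      simp only [degSeqList] at *
      calc degSeq t + (degSeq (graftList u s ss).1 + degSeqList (graftList u s ss).2) + {0}
          = degSeq t + (degSeq (graftList u s ss).1 + degSeqList (graftList u s ss).2 + {0}) := by
            abel
        _ = degSeq t + (degSeq u + (degSeq s + degSeqList ss)) := by rw [h]
        _ = degSeq u + (degSeq t + (degSeq s + degSeqList ss)) := by abel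
termination_by sizeOf t + sizeOf ts
end

mutual
theorem rank_le_graft (u t : RTree) : rank t ≤ rank (graft u t) := by
  cases t with
  | node ts =>
    cases ts with
    | nil => simp [rank]
    | cons t ts =>
      rw [graft]
      have h := minRank_le_graftList u t ts
      simp only [rank]
      omega
termination_by sizeOf t
theorem minRank_le_graftList (u t : RTree) (ts : List RTree) :
    minRankAux t ts ≤ minRankAux (graftList u t ts).1 (graftList u t ts).2 := by
  cases ts with
  | nil =>
    have h := rank_le_graft u t
    simpa [graftList, minRankAux] using h
  | cons s ss =>
    rw [graftList]
    split
    · have h := rank_le_graft u t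
      simp only [minRankAux]
      omega
    · have h := minRank_le_graftList u s ss
      simp only [minRankAux]
      omega
termination_by sizeOf t + sizeOf ts
end

theorem degSeqList_get (ts : List RTree) (i : ℕ) (t : RTree) (h : ts[i]? = some t) :
    degSeqList ts = degSeq t + degSeqList (ts.eraseIdx i) := by
  induction ts generalizing i with
  | nil => simp at h
  | cons a as ih =>
    cases i with
    | zero =>
      simp at h
      subst h
      simp [List.eraseIdx, degSeqList]
    | succ i =>
      simp only [List.getElem?_cons_succ] at h
      rw [List.eraseIdx]
      simp only [degSeqList, ih i h]
      abel

end RTree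

open RTree in
/-- The maximum rank over all rooted trees with a given outdegree sequence and all their
vertices is achieved at the root of some such tree: for every rooted tree `T` and every
vertex of `T` (a position `p`, whose subtree is `S`, so that the rank of that vertex is
`S.rank`), there is a rooted tree `T'` with the same outdegree sequence as `T` whose root
has rank at least as large. -/
theorem max_rank_at_root_degSeq (T : RTree) (p : List ℕ) (S : RTree)
    (hS : subtreeAt p T = some S) :
    ∃ T' : RTree, T'.degSeq = T.degSeq ∧ S.rank ≤ T'.rank := by
  induction p generalizing T S with
  | nil =>
    simp only [subtreeAt, Option.some.injEq] at hS
    exact ⟨T, rfl, by rw [hS]⟩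
  | cons i is ih =>
    obtain ⟨ts⟩ := T
    simp only [subtreeAt] at hS
    obtain ⟨t, ht, hts⟩ := Option.bind_eq_some_iff.mp hS
    obtain ⟨t', hdeg, hrank⟩ := ih t S hts
    set u : RTree := .node (.node [] :: ts.eraseIdx i) with hu
    refine ⟨graft u t', ?_, le_trans hrank (rank_le_graft u t')⟩
    have hi : i < ts.length := by
      by_contra hc
      rw [List.getElem?_eq_none_iff.mpr (by omega)] at ht
      exact Option.noConfusion rfl (heq_of_eq ht)
    have hlen : (ts.eraseIdx i).length = ts.length - 1 := by simp [List.length_eraseIdx, hi]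
    have h1 := degSeq_graft u t'
    have h2 := degSeqList_get ts i t ht
    have key : degSeq (graft u t') + {0} = degSeq (RTree.node ts) + {0} := by
      rw [h1, hdeg, hu]
      simp only [degSeq, degSeqList, List.length_cons, List.length_nil, hlen]
      have : ts.length - 1 + 1 = ts.length := by omega
      rw [this, h2]
      simp only [← Multiset.singleton_add]
      abel
    exact add_right_cancel key
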